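/- Let Θ = {1,a,b,c} be the Klein four-group. There is an exact sequence of Z[Θ]-modules 0 → Z → Z[Θ] ⊕ Z → Z[Θ/⟨a⟩] ⊕ Z[Θ/⟨b⟩] ⊕ Z[Θ/⟨c⟩] → (Z⊕Z⊕Z)/Z → 0, where the first map sends 1 to (ΣΘ, -2), the middle map sends (x, n) to (pr_a(x) + n·Σ, pr_b(x) + n·Σ, pr_c(x) + n·Σ) with pr_θ the natural projection Z[Θ] → Z[Θ/⟨θ⟩] and Σ the sum of the two elements of Z[Θ/⟨θ⟩], and the last map sends each summand via augmentation to the corresponding coordinate of Z^3 modulo the diagonal copy of Z. -/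
import Mathlib


/-! The Klein four-group `Θ = ℤ/2 × ℤ/2` with nontrivial elements `a = (1,0)`,
`b = (0,1)`, `c = (1,1)`.  We model `ℤ[Θ]` as functions `Θ → ℤ`, and `ℤ[Θ/⟨θ⟩]` as
functions `ZMod 2 → ℤ` via the coordinate invariant under `θ` (the second coordinate
for `a`, the first for `b`, their sum for `c`).  The target `ℤ³/ℤ` is `ℤ³` modulo the
diagonal copy of `ℤ`. -/

noncomputable abbrev stmt4Target : Type :=
  (ℤ × ℤ × ℤ) ⧸ Submodule.span ℤ {((1 : ℤ), (1 : ℤ), (1 : ℤ))}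

/-- Exactness of the quadruple `0 → ℤ → ℤ[Θ]⊕ℤ → ⊕_θ ℤ[Θ/⟨θ⟩] → ℤ³/ℤ → 0`
of permutation modules over the Klein four-group `Θ`. -/
theorem stmt_4
    (d₀ : ℤ → (ZMod 2 × ZMod 2 → ℤ) × ℤ)
    (hd₀ : ∀ n : ℤ, d₀ n = (fun _ => n, -2 * n))
    (d₁ : (ZMod 2 × ZMod 2 → ℤ) × ℤ →
      (ZMod 2 → ℤ) × (ZMod 2 → ℤ) × (ZMod 2 → ℤ))
    (hd₁ : ∀ x : (ZMod 2 × ZMod 2 → ℤ) × ℤ, d₁ x =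
      (fun j => x.1 (0, j) + x.1 (1, j) + x.2,
       fun j => x.1 (j, 0) + x.1 (j, 1) + x.2,
       fun j => x.1 (0, j) + x.1 (1, j + 1) + x.2))
    (d₂ : (ZMod 2 → ℤ) × (ZMod 2 → ℤ) × (ZMod 2 → ℤ) → stmt4Target)
    (hd₂ : ∀ y : (ZMod 2 → ℤ) × (ZMod 2 → ℤ) × (ZMod 2 → ℤ), d₂ y =
      Submodule.Quotient.mk
        (y.1 0 + y.1 1, y.2.1 0 + y.2.1 1, y.2.2 0 + y.2.2 1)) :
    Function.Injective d₀ ∧ Function.Exact d₀ d₁ ∧ Function.Exact d₁ d₂ ∧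
      Function.Surjective d₂ := by
  have e01 : (0 : ZMod 2) + 1 = 1 := by decide
  have e11 : (1 : ZMod 2) + 1 = 0 := by decide
  have htwo : ∀ j : ZMod 2, j = 0 ∨ j = 1 := by decide
  refine ⟨?_, ?_, ?_, ?_⟩
  · intro m n h
    rw [hd₀ m, hd₀ n, Prod.ext_iff] at h
    have := h.2
    omega
  · intro x
    rw [hd₁ x]
    constructor
    · intro h
      have hA : ∀ j, x.1 (0, j) + x.1 (1, j) + x.2 = 0 := fun j =>
        congrFun (congrArg Prod.fst h) j
      have hB : ∀ j, x.1 (j, 0) + x.1 (j, 1) + x.2 = 0 := fun j =>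
        congrFun (congrArg (fun p => p.2.1) h) j
      have hC : ∀ j, x.1 (0, j) + x.1 (1, j + 1) + x.2 = 0 := fun j =>
        congrFun (congrArg (fun p => p.2.2) h) j
      have hA0 := hA 0; have hA1 := hA 1
      have hB0 := hB 0; have hB1 := hB 1
      have hC0 := hC 0; have hC1 := hC 1
      rw [e01] at hC0; rw [e11] at hC1
      refine ⟨x.1 (1, 0), ?_⟩
      rw [hd₀]
      refine Prod.ext ?_ (by dsimp; omega)
      funext p
      obtain ⟨i, j⟩ := p
      rcases htwo i with rfl | rfl <;> rcases htwo j with rfl | rfl <;>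
        simp only [Prod.mk_zero_zero, Prod.mk_one_one] at hA0 hA1 hB0 hB1 hC0 hC1 ⊢ <;>
        omega
    · rintro ⟨n, rfl⟩
      rw [hd₀]
      refine Prod.ext ?_ (Prod.ext ?_ ?_) <;> funext j <;> dsimp <;> omega
  · intro y
    rw [hd₂ y]
    rw [Submodule.Quotient.mk_eq_zero, Submodule.mem_span_singleton]
    constructor
    · rintro ⟨r, hr⟩
      rw [Prod.ext_iff, Prod.ext_iff] at hr
      simp only [Prod.smul_fst, Prod.smul_snd, smul_eq_mul, mul_one] at hr
      obtain ⟨h1, h2, h3⟩ := hr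
      set g0 := y.1 0 with hg0
      set g1 := y.1 1 with hg1
      set h0 := y.2.1 0 with hh0
      set h1' := y.2.1 1 with hh1
      set k0 := y.2.2 0 with hk0
      set k1 := y.2.2 1 with hk1
      set m : ℤ := h0 + k0 - g1 with hm
      have t0 : ((0 : ZMod 2) = 0) = True := eq_true rfl
      have t1 : ((1 : ZMod 2) = 0) = False := eq_false (by decide)
      refine ⟨(fun p => if p.1 = 0 then (if p.2 = 0 then 0 else h0 - m)
        else (if p.2 = 0 then g0 - m else k0 - m), m), ?_⟩
      rw [hd₁]
      refine Prod.ext ?_ (Prod.ext ?_ ?_) <;> funext j <;>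
        rcases htwo j with rfl | rfl <;>
        simp only [e01, e11, t0, t1, if_true, if_false] <;> omega
    · rintro ⟨x, rfl⟩
      rw [hd₁ x]
      refine ⟨x.1 (0,0) + x.1 (0,1) + x.1 (1,0) + x.1 (1,1) + 2 * x.2, ?_⟩
      rw [Prod.ext_iff, Prod.ext_iff]
      simp only [Prod.smul_fst, Prod.smul_snd, smul_eq_mul, mul_one, e01, e11]
      refine ⟨by ring, by ring, by ring⟩
  · intro z
    obtain ⟨v, rfl⟩ := Submodule.Quotient.mk_surjective _ z
    refine ⟨(fun j => if j = 0 then v.1 else 0,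
      fun j => if j = 0 then v.2.1 else 0,
      fun j => if j = 0 then v.2.2 else 0), ?_⟩
    rw [hd₂]
    norm_num
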